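/- Assume d ≥ 1, L ≥ 1, γ > 0, λ > 0. There exists ᾱ > 0 such that for every step size α with 0 < α ≤ ᾱ and every initialization (κ₀, ν₀) ∈ [−1, 1]², the PGD iterates (κ_t, ν_t) satisfy: (a) the distance between successive iterates tends to zero, i.e. |κ_{t+1} − κ_t| + |ν_{t+1} − ν_t| → 0 as t → ∞; and (b) every accumulation point (κ, ν) of the sequence (κ_t, ν_t) satisfies (1 − κ²)·∂κR(κ, ν) = 0 and (1 − ν²)·∂νR(κ, ν) = 0. -/

import Mathlib

open MeasureTheory ProbabilityTheory Real Filter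

noncomputable def erf (u : ℝ) : ℝ := 2 / Real.sqrt Real.pi * ∫ r in (0:ℝ)..u, Real.exp (-r ^ 2)

noncomputable def zeta (t s : ℝ) : ℝ := ∫ g, erf (t + g) ^ 2 ∂(gaussianReal 0 s.toNNReal)

/-- The reduced risk `R(κ, ν)` on the invariant manifold. -/
noncomputable def Rred (d L : ℕ) (γ lam ε : ℝ) (κ ν : ℝ) : ℝ :=
  γ ^ 2 - 2 * γ ^ 2 * ν * erf (lam * Real.sqrt ((d : ℝ) / 2) * κ /
      Real.sqrt (1 + 2 * lam ^ 2 * γ ^ 2))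
    + γ ^ 2 * zeta (lam * Real.sqrt ((d : ℝ) / 2) * κ) (lam ^ 2 * γ ^ 2)
    + ((L : ℝ) - 1) * zeta 0 (lam ^ 2) + ε ^ 2

/-- Partial derivative `∂κR` of the reduced risk with respect to its first argument. -/
noncomputable def dkR (d L : ℕ) (γ lam ε : ℝ) (κ ν : ℝ) : ℝ :=
  deriv (fun x => Rred d L γ lam ε x ν) κ

/-- Partial derivative `∂νR` of the reduced risk with respect to its second argument. -/
noncomputable def dvR (d L : ℕ) (γ lam ε : ℝ) (κ ν : ℝ) : ℝ :=
  deriv (fun y => Rred d L γ lam ε κ y) ν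

/-- The PGD map `g_α`. -/
noncomputable def pgd (d L : ℕ) (γ lam ε α : ℝ) (p : ℝ × ℝ) : ℝ × ℝ :=
  ((p.1 - α * dkR d L γ lam ε p.1 p.2 * (1 - p.1 ^ 2)) /
      Real.sqrt (1 + α ^ 2 * (dkR d L γ lam ε p.1 p.2) ^ 2 * (1 - p.1 ^ 2)),
   (p.2 - α * dvR d L γ lam ε p.1 p.2 * (1 - p.2 ^ 2)) /
      Real.sqrt (1 + α ^ 2 * (dvR d L γ lam ε p.1 p.2) ^ 2 * (1 - p.2 ^ 2)))

/-- The square `[−1, 1]²`. -/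
def sqIcc : Set (ℝ × ℝ) := {p | p.1 ∈ Set.Icc (-1 : ℝ) 1 ∧ p.2 ∈ Set.Icc (-1 : ℝ) 1}

open scoped ContDiff

noncomputable def erfD (u : ℝ) : ℝ := 2 / Real.sqrt Real.pi * Real.exp (-u ^ 2)

lemma contExp : Continuous fun r : ℝ => Real.exp (-r ^ 2) := by fun_prop

lemma hasDerivAt_erf (u : ℝ) : HasDerivAt erf (erfD u) u := by
  have h1 : HasDerivAt (fun u : ℝ => ∫ r in (0:ℝ)..u, Real.exp (-r ^ 2)) (Real.exp (-u ^ 2)) u := by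
    apply intervalIntegral.integral_hasDerivAt_right
    · exact contExp.intervalIntegrable _ _
    · exact contExp.stronglyMeasurableAtFilter _ _
    · exact contExp.continuousAt
  exact h1.const_mul _

lemma contDiff_erf : ContDiff ℝ (2 : WithTop ℕ∞) erf := by
  have h1 : ContDiff ℝ ∞ erfD := by
    unfold erfD; fun_prop
  have h2 : ContDiff ℝ ∞ erf := by
    rw [contDiff_infty_iff_deriv]
    refine ⟨fun u => (hasDerivAt_erf u).differentiableAt, ?_⟩
    have : deriv erf = erfD := funext fun u => (hasDerivAt_erf u).deriv
    rw [this]; exact h1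
  exact h2.of_le (by decide)

lemma sqIcc_eq : sqIcc = Set.Icc ((-1:ℝ), (-1:ℝ)) ((1:ℝ), (1:ℝ)) := by
  ext p
  simp only [sqIcc, Set.mem_setOf_eq, Set.mem_Icc, Prod.le_def]
  tauto

lemma isCompact_sqIcc : IsCompact sqIcc := sqIcc_eq ▸ isCompact_Icc
lemma convex_sqIcc : Convex ℝ sqIcc := sqIcc_eq ▸ convex_Icc _ _
lemma isClosed_sqIcc : IsClosed sqIcc := sqIcc_eq ▸ isClosed_Icc

lemma integrable_gauss : Integrable (fun r : ℝ => Real.exp (-r ^ 2)) := by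
  have := integrable_exp_neg_mul_sq (b := 1) one_pos
  simpa using this

lemma interval_gauss_le (u : ℝ) : |∫ r in (0:ℝ)..u, Real.exp (-r ^ 2)| ≤ Real.sqrt Real.pi := by
  have htot : ∫ r : ℝ, Real.exp (-r ^ 2) = Real.sqrt Real.pi := by
    have := integral_gaussian 1
    simpa using this
  have key : ∀ a b : ℝ, a ≤ b → |∫ r in a..b, Real.exp (-r ^ 2)| ≤ Real.sqrt Real.pi := by
    intro a b hab
    rw [intervalIntegral.integral_of_le hab]
    rw [abs_of_nonneg (setIntegral_nonneg measurableSet_Ioc fun x _ => (Real.exp_pos _).le)]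
    rw [← htot]
    exact setIntegral_le_integral integrable_gauss
      (Filter.Eventually.of_forall fun x => (Real.exp_pos _).le)
  rcases le_total 0 u with h | h
  · exact key 0 u h
  · rw [show (∫ r in (0:ℝ)..u, Real.exp (-r ^ 2)) = -∫ r in u..(0:ℝ), Real.exp (-r ^ 2) from
      intervalIntegral.integral_symm u 0, abs_neg]
    exact key u 0 h

lemma sqrt_pi_pos : 0 < Real.sqrt Real.pi := Real.sqrt_pos.2 Real.pi_pos

lemma sqrt_pi_ge_one : 1 ≤ Real.sqrt Real.pi := by
  rw [show (1:ℝ) = Real.sqrt 1 by simp]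
  exact Real.sqrt_le_sqrt (by nlinarith [Real.pi_gt_three])

lemma abs_erf_le (u : ℝ) : |erf u| ≤ 2 := by
  have h := interval_gauss_le u
  have h2 : |erf u| = 2 / Real.sqrt Real.pi * |∫ r in (0:ℝ)..u, Real.exp (-r ^ 2)| := by
    rw [erf, abs_mul, abs_of_nonneg (by positivity : (0:ℝ) ≤ 2 / Real.sqrt Real.pi)]
  rw [h2]
  calc 2 / Real.sqrt Real.pi * |∫ r in (0:ℝ)..u, Real.exp (-r ^ 2)|
      ≤ 2 / Real.sqrt Real.pi * Real.sqrt Real.pi := by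
        apply mul_le_mul_of_nonneg_left h (by positivity)
    _ = 2 := by field_simp

lemma abs_erfD_le (u : ℝ) : |erfD u| ≤ 2 := by
  have h1 : Real.exp (-u ^ 2) ≤ 1 := Real.exp_le_one_iff.2 (neg_nonpos.2 (sq_nonneg u))
  have h2 : 0 < Real.exp (-u ^ 2) := Real.exp_pos _
  have h3 : (0:ℝ) < 2 / Real.sqrt Real.pi := by positivity
  rw [erfD, abs_mul, abs_of_nonneg h3.le, abs_of_nonneg h2.le]
  have h4 : 2 / Real.sqrt Real.pi ≤ 2 := by
    rw [div_le_iff₀ sqrt_pi_pos]; nlinarith [sqrt_pi_ge_one]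
  nlinarith

noncomputable def erfD' (u : ℝ) : ℝ := 2 / Real.sqrt Real.pi * (Real.exp (-u ^ 2) * -(2 * u))

lemma hasDerivAt_erfD (u : ℝ) : HasDerivAt erfD (erfD' u) u := by
  have h1 : HasDerivAt (fun u : ℝ => -u ^ 2) (-(2 * u)) u := by
    simpa using ((hasDerivAt_pow 2 u).fun_neg)
  have h2 := (h1.exp).const_mul (2 / Real.sqrt Real.pi)
  exact h2

lemma abs_erfD'_le (u : ℝ) : |erfD' u| ≤ 2 := by
  have hexp : 0 < Real.exp (-u ^ 2) := Real.exp_pos _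
  have key : |Real.exp (-u ^ 2) * -(2 * u)| ≤ 1 := by
    have h1 : 2 * |u| ≤ Real.exp (u ^ 2) := by
      nlinarith [Real.add_one_le_exp (u ^ 2), sq_nonneg (|u| - 1), sq_abs u]
    have h2 : Real.exp (-u ^ 2) * Real.exp (u ^ 2) = 1 := by
      rw [← Real.exp_add]; simp
    rw [abs_mul, abs_of_nonneg hexp.le, abs_neg, abs_mul, abs_of_nonneg (by norm_num : (0:ℝ) ≤ 2)]
    nlinarith
  have h3 : 2 / Real.sqrt Real.pi ≤ 2 := by
    rw [div_le_iff₀ sqrt_pi_pos]; nlinarith [sqrt_pi_ge_one]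
  rw [erfD', abs_mul, abs_of_nonneg (by positivity : (0:ℝ) ≤ 2 / Real.sqrt Real.pi)]
  nlinarith [abs_nonneg (Real.exp (-u ^ 2) * -(2 * u)), (by positivity : (0:ℝ) < 2 / Real.sqrt Real.pi)]

noncomputable def phi (x : ℝ) : ℝ := erf x ^ 2
noncomputable def phi1 (x : ℝ) : ℝ := 2 * erf x * erfD x
noncomputable def phi2 (x : ℝ) : ℝ := 2 * erfD x ^ 2 + 2 * erf x * erfD' x

lemma continuous_erf : Continuous erf := contDiff_erf.continuous
lemma continuous_erfD : Continuous erfD := by unfold erfD; fun_prop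
lemma continuous_erfD' : Continuous erfD' := by unfold erfD'; fun_prop

lemma hasDerivAt_phi (x : ℝ) : HasDerivAt phi (phi1 x) x := by
  have := (hasDerivAt_erf x).fun_pow 2
  have h : phi = fun x => erf x ^ 2 := rfl
  rw [h, phi1]
  exact this.congr_deriv (by ring)

lemma hasDerivAt_phi1 (x : ℝ) : HasDerivAt phi1 (phi2 x) x := by
  have h1 := ((hasDerivAt_erf x).const_mul 2).fun_mul (hasDerivAt_erfD x)
  have h : phi1 = fun x => 2 * erf x * erfD x := rfl
  rw [h, phi2]
  exact h1.congr_deriv (by ring)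

lemma continuous_phi : Continuous phi := by unfold phi; exact continuous_erf.pow 2
lemma continuous_phi1 : Continuous phi1 := by
  unfold phi1; exact ((continuous_const.mul continuous_erf).mul continuous_erfD)
lemma continuous_phi2 : Continuous phi2 := by
  unfold phi2
  exact ((continuous_const.mul (continuous_erfD.pow 2)).add
    ((continuous_const.mul continuous_erf).mul continuous_erfD'))

lemma abs_phi_le (x : ℝ) : |phi x| ≤ 16 := by
  have := abs_erf_le x
  rw [phi, abs_pow]
  nlinarith [abs_nonneg (erf x)]

lemma abs_phi1_le (x : ℝ) : |phi1 x| ≤ 16 := by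
  have h1 := abs_erf_le x; have h2 := abs_erfD_le x
  rw [phi1, abs_mul, abs_mul]
  have : |(2:ℝ)| = 2 := by norm_num
  rw [this]
  nlinarith [abs_nonneg (erf x), abs_nonneg (erfD x)]

lemma abs_phi2_le (x : ℝ) : |phi2 x| ≤ 16 := by
  have h1 := abs_erf_le x; have h2 := abs_erfD_le x; have h3 := abs_erfD'_le x
  have k1 : |2 * erfD x ^ 2| ≤ 8 := by
    rw [abs_mul, abs_pow]
    have : |(2:ℝ)| = 2 := by norm_num
    rw [this]; nlinarith [abs_nonneg (erfD x)]
  have k2 : |2 * erf x * erfD' x| ≤ 8 := by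
    rw [abs_mul, abs_mul]
    have : |(2:ℝ)| = 2 := by norm_num
    rw [this]; nlinarith [abs_nonneg (erf x), abs_nonneg (erfD' x)]
  calc |phi2 x| ≤ |2 * erfD x ^ 2| + |2 * erf x * erfD' x| := abs_add_le _ _
    _ ≤ 16 := by linarith

section conv
variable (μ : Measure ℝ) [IsProbabilityMeasure μ]

lemma integrable_conv (ψ : ℝ → ℝ) (hψ : Continuous ψ) (C : ℝ) (hb : ∀ x, |ψ x| ≤ C) (t : ℝ) :
    Integrable (fun g => ψ (t + g)) μ := by
  refine Integrable.mono' (integrable_const C) ?_ ?_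
  · exact (hψ.comp (continuous_const.add continuous_id)).aestronglyMeasurable
  · exact Filter.Eventually.of_forall fun g => hb (t + g)

lemma hasDerivAt_conv (ψ ψ' : ℝ → ℝ) (hψ : Continuous ψ) (hψ' : Continuous ψ')
    (hd : ∀ x, HasDerivAt ψ (ψ' x) x) (C : ℝ) (hbψ : ∀ x, |ψ x| ≤ C) (hb : ∀ x, |ψ' x| ≤ C)
    (t : ℝ) :
    HasDerivAt (fun t => ∫ g, ψ (t + g) ∂μ) (∫ g, ψ' (t + g) ∂μ) t := by
  have key := hasDerivAt_integral_of_dominated_loc_of_deriv_le (μ := μ) (x₀ := t)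
      (F := fun x a => ψ (x + a)) (F' := fun x a => ψ' (x + a)) (bound := fun _ => C)
      (Metric.ball_mem_nhds t one_pos)
      (Filter.Eventually.of_forall fun x =>
        ((hψ.comp (continuous_const.add continuous_id)).aestronglyMeasurable))
      (integrable_conv μ ψ hψ C hbψ t)
      ((hψ'.comp (continuous_const.add continuous_id)).aestronglyMeasurable)
      (Filter.Eventually.of_forall fun a x _ => by
        simpa [Real.norm_eq_abs] using hb (x + a))
      (integrable_const C)
      (Filter.Eventually.of_forall fun a x _ => by
        simpa [add_comm] using (hd (x + a)).comp_add_const x a)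
  exact key.2

lemma continuous_conv (ψ : ℝ → ℝ) (hψ : Continuous ψ) (C : ℝ) (hb : ∀ x, |ψ x| ≤ C) :
    Continuous (fun t => ∫ g, ψ (t + g) ∂μ) := by
  apply continuous_of_dominated (bound := fun _ => C)
  · exact fun x => (hψ.comp (continuous_const.add continuous_id)).aestronglyMeasurable
  · exact fun x => Filter.Eventually.of_forall fun a => by
      simpa [Real.norm_eq_abs] using hb (x + a)
  · exact integrable_const C
  · exact Filter.Eventually.of_forall fun a => hψ.comp (continuous_id.add continuous_const)

lemma contDiff_Z : ContDiff ℝ (2 : WithTop ℕ∞) (fun t => ∫ g, phi (t + g) ∂μ) := by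
  set Z1 := fun t => ∫ g, phi1 (t + g) ∂μ with hZ1def
  set Z2 := fun t => ∫ g, phi2 (t + g) ∂μ with hZ2def
  have hZ : ∀ t, HasDerivAt (fun t => ∫ g, phi (t + g) ∂μ) (Z1 t) t := fun t =>
    hasDerivAt_conv μ phi phi1 continuous_phi continuous_phi1 hasDerivAt_phi 16
      abs_phi_le abs_phi1_le t
  have hZ1 : ∀ t, HasDerivAt Z1 (Z2 t) t := fun t =>
    hasDerivAt_conv μ phi1 phi2 continuous_phi1 continuous_phi2 hasDerivAt_phi1 16
      abs_phi1_le abs_phi2_le t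
  have hZ2c : Continuous Z2 := continuous_conv μ phi2 continuous_phi2 16 abs_phi2_le
  have h1 : ContDiff ℝ (1 : WithTop ℕ∞) Z1 := by
    rw [contDiff_one_iff_deriv]
    refine ⟨fun t => (hZ1 t).differentiableAt, ?_⟩
    have : deriv Z1 = Z2 := funext fun t => (hZ1 t).deriv
    rw [this]; exact hZ2c
  have h2 : ContDiff ℝ ((1 : WithTop ℕ∞) + 1) (fun t => ∫ g, phi (t + g) ∂μ) := by
    rw [contDiff_succ_iff_deriv]
    refine ⟨fun t => (hZ t).differentiableAt, by intro h; exact absurd h (by decide), ?_⟩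
    have : deriv (fun t => ∫ g, phi (t + g) ∂μ) = Z1 := funext fun t => (hZ t).deriv
    rw [this]; exact h1
  have : ((1 : WithTop ℕ∞) + 1) = (2 : WithTop ℕ∞) := by norm_num
  rwa [this] at h2

end conv

set_option maxHeartbeats 1000000 in
lemma step_aux (κ D α u w S κ' : ℝ) (hu : u = 1 - κ^2) (hw : w = α^2 * D^2 * u)
    (hS2 : S^2 = 1 + w) (hS1 : 1 ≤ S) (hκ'S : κ' * S = κ - α * D * u)
    (hκ : |κ| ≤ 1) (hα : 0 < α) (hm : α * |D| ≤ 1/2) :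
    |κ'| ≤ 1 ∧ D * (κ' - κ) ≤ -(α/2) * (D^2 * u) ∧ (κ' - κ)^2 ≤ 3 * α^2 * (D^2 * u) := by
  have hκ2 : κ^2 ≤ 1 := by nlinarith [abs_le.1 hκ, sq_abs κ]
  have hu0 : 0 ≤ u := by rw [hu]; linarith
  have hu1 : u ≤ 1 := by rw [hu]; nlinarith [sq_nonneg κ]
  have hw0 : 0 ≤ w := by rw [hw]; positivity
  have hw4 : w ≤ 1/4 := by
    have he : (α * |D|)^2 ≤ 1/4 := by nlinarith [mul_nonneg hα.le (abs_nonneg D)]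
    have h2 : α^2 * D^2 ≤ 1/4 := by rw [show α^2 * D^2 = (α * |D|)^2 by rw [mul_pow, sq_abs]]; exact he
    rw [hw]
    nlinarith [mul_nonneg (mul_nonneg (sq_nonneg α) (sq_nonneg D)) hu0]
  have hS0 : 0 < S := lt_of_lt_of_le one_pos hS1
  have hSle : S ≤ 1 + w/2 := by nlinarith
  have hS98 : S ≤ 9/8 := by nlinarith
  have hδS : (κ' - κ) * S = κ * (1 - S) - α * D * u := by
    have : (κ' - κ) * S = κ' * S - κ * S := by ring
    rw [this, hκ'S]; ring
  have goal1 : |κ'| ≤ 1 := by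
    have hsq1 : (κ' * S)^2 ≤ S^2 := by
      rw [hκ'S, hS2, hw, hu]
      nlinarith [mul_nonneg (by nlinarith [sq_nonneg κ] : (0:ℝ) ≤ 1 - κ^2) (sq_nonneg (1 + α * D * κ))]
    have h2 : κ'^2 ≤ 1 := by
      have hS2pos : 0 < S^2 := by positivity
      nlinarith [sq_nonneg κ']
    nlinarith [abs_nonneg κ', sq_abs κ']
  have hDκ : D * κ * (1 - S) ≤ α * D^2 * u / 4 := by
    have hS1' : (0:ℝ) ≤ S - 1 := by linarith
    have e1 : D * κ * (1 - S) = (-(D * κ)) * (S - 1) := by ring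
    have e2 : -(D * κ) ≤ |D| * |κ| := by
      rw [← abs_mul]; exact neg_le_abs _
    have e3 : |D| * |κ| ≤ |D| := by
      nlinarith [abs_nonneg D, abs_nonneg κ]
    have e4 : (-(D * κ)) * (S - 1) ≤ |D| * (S - 1) :=
      mul_le_mul_of_nonneg_right (e2.trans e3) hS1'
    have e5 : |D| * (S - 1) ≤ |D| * (w/2) :=
      mul_le_mul_of_nonneg_left (by linarith) (abs_nonneg D)
    have e6 : |D| * (w/2) ≤ α * D^2 * u / 4 := by
      rw [hw]
      nlinarith [mul_nonneg (mul_nonneg hα.le (sq_nonneg D)) hu0, sq_abs D, abs_nonneg D]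
    linarith [e1 ▸ (e4.trans (e5.trans e6))]
  have goal2 : D * (κ' - κ) ≤ -(α/2) * (D^2 * u) := by
    set X : ℝ := D * (κ' - κ) with hX
    set T : ℝ := α * (D^2 * u) with hT
    have hT0 : 0 ≤ T := by rw [hT]; positivity
    have hXS : X * S ≤ -(3/4) * T := by
      have e : X * S = D * κ * (1 - S) - α * D^2 * u := by
        rw [hX, show D * (κ' - κ) * S = D * ((κ' - κ) * S) by ring, hδS]; ring
      rw [e, hT]; linarith
    have h6 : (T/2) * S ≤ (9/16) * T := by nlinarith
    have h5 : (X + T/2) * S ≤ 0 := by nlinarith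
    have h7 : X + T/2 ≤ 0 := by
      by_contra hcon
      push_neg at hcon
      nlinarith [mul_pos hcon hS0]
    nlinarith [h7]
  have goal3 : (κ' - κ)^2 ≤ 3 * α^2 * (D^2 * u) := by
    have hT0 : (0:ℝ) ≤ α^2 * (D^2 * u) := by positivity
    have ha : (κ * (1 - S))^2 ≤ (w/2)^2 := by
      have h1 : (S - 1)^2 ≤ (w/2)^2 := by nlinarith
      have h0 : (κ * (1 - S))^2 = κ^2 * (S - 1)^2 := by ring
      rw [h0]
      nlinarith [sq_nonneg (S - 1), sq_nonneg κ]
    have hb : (α * D * u)^2 ≤ α^2 * (D^2 * u) := by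
      have h0 : (α * D * u)^2 = α^2 * D^2 * u * u := by ring
      rw [h0]
      nlinarith [mul_nonneg (mul_nonneg (sq_nonneg α) (sq_nonneg D)) hu0]
    have hw2 : (w/2)^2 ≤ (1/16) * (α^2 * (D^2 * u)) := by
      rw [hw]
      nlinarith [mul_nonneg (mul_nonneg (sq_nonneg α) (sq_nonneg D)) hu0]
    have h1 : ((κ' - κ) * S)^2 ≤ 3 * α^2 * (D^2 * u) := by
      rw [hδS]
      nlinarith [sq_nonneg (κ * (1 - S) + α * D * u)]
    have h2 : (κ' - κ)^2 ≤ ((κ' - κ) * S)^2 := by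
      rw [show ((κ' - κ) * S)^2 = (κ' - κ)^2 * S^2 by ring]
      nlinarith [sq_nonneg (κ' - κ)]
    linarith
  exact ⟨goal1, goal2, goal3⟩

lemma step_key (κ D α : ℝ) (hκ : |κ| ≤ 1) (hα : 0 < α) (hm : α * |D| ≤ 1/2) :
    |(κ - α * D * (1 - κ^2)) / Real.sqrt (1 + α^2 * D^2 * (1 - κ^2))| ≤ 1 ∧
    D * ((κ - α * D * (1 - κ^2)) / Real.sqrt (1 + α^2 * D^2 * (1 - κ^2)) - κ)
      ≤ -(α/2) * (D^2 * (1 - κ^2)) ∧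
    ((κ - α * D * (1 - κ^2)) / Real.sqrt (1 + α^2 * D^2 * (1 - κ^2)) - κ)^2
      ≤ 3 * α^2 * (D^2 * (1 - κ^2)) := by
  have hκ2 : κ^2 ≤ 1 := by nlinarith [abs_le.1 hκ, sq_abs κ]
  have hw0 : (0:ℝ) ≤ α^2 * D^2 * (1 - κ^2) :=
    mul_nonneg (mul_nonneg (sq_nonneg α) (sq_nonneg D)) (by linarith)
  have hS2 : (Real.sqrt (1 + α^2 * D^2 * (1 - κ^2)))^2 = 1 + α^2 * D^2 * (1 - κ^2) :=
    Real.sq_sqrt (by linarith)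
  have hS1 : 1 ≤ Real.sqrt (1 + α^2 * D^2 * (1 - κ^2)) := by
    have h := Real.sqrt_le_sqrt (show (1:ℝ) ≤ 1 + α^2 * D^2 * (1 - κ^2) by linarith)
    rwa [Real.sqrt_one] at h
  have hS0 : (0:ℝ) < Real.sqrt (1 + α^2 * D^2 * (1 - κ^2)) := lt_of_lt_of_le one_pos hS1
  exact step_aux κ D α (1 - κ^2) (α^2 * D^2 * (1 - κ^2)) _ _ rfl rfl hS2 hS1
    (div_mul_cancel₀ _ hS0.ne') hκ hα hm

lemma fix_key (κ D α : ℝ) (hκ : |κ| ≤ 1) (hα : 0 < α) (hm : α * |D| ≤ 1/2)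
    (heq : (κ - α * D * (1 - κ^2)) / Real.sqrt (1 + α^2 * D^2 * (1 - κ^2)) = κ) :
    (1 - κ^2) * D = 0 := by
  by_contra hne
  have hκ2 : κ^2 ≤ 1 := by nlinarith [abs_le.1 hκ, sq_abs κ]
  have hu0 : (0:ℝ) ≤ 1 - κ^2 := by linarith
  have hupos : (0:ℝ) < 1 - κ^2 := by
    rcases hu0.lt_or_eq with h | h
    · exact h
    · exact absurd (by rw [← h]; ring) hne
  have hD : D ≠ 0 := fun h => hne (by rw [h]; ring)
  have hDpos : 0 < |D| := abs_pos.2 hD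
  have hw0 : (0:ℝ) < α^2 * D^2 * (1 - κ^2) := by positivity
  set w : ℝ := α^2 * D^2 * (1 - κ^2) with hw
  set S : ℝ := Real.sqrt (1 + w) with hS
  have hS2 : S^2 = 1 + w := Real.sq_sqrt (by linarith)
  have hS1 : 1 ≤ S := by
    have h := Real.sqrt_le_sqrt (show (1:ℝ) ≤ 1 + w by linarith)
    rwa [Real.sqrt_one] at h
  have hS0 : (0:ℝ) < S := lt_of_lt_of_le one_pos hS1
  have heq2 : κ - α * D * (1 - κ^2) = κ * S := by
    field_simp at heq
    linarith [heq]
  have hkey : κ * (S - 1) = -(α * D * (1 - κ^2)) := by linarith [heq2]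
  have habs : |κ| * (S - 1) = α * |D| * (1 - κ^2) := by
    have h1 : |κ * (S - 1)| = |α * D * (1 - κ^2)| := by rw [hkey, abs_neg]
    rw [abs_mul, abs_of_nonneg (by linarith : (0:ℝ) ≤ S - 1)] at h1
    rw [abs_mul, abs_mul, abs_of_pos hα, abs_of_pos hupos] at h1
    exact h1
  have hSle : S ≤ 1 + w/2 := by nlinarith
  have hfin : α * |D| * (1 - κ^2) ≤ (α * |D|)^2 * (1 - κ^2) / 2 := by
    calc α * |D| * (1 - κ^2) = |κ| * (S - 1) := habs.symm
      _ ≤ 1 * (w/2) := by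
          apply mul_le_mul hκ (by linarith) (by linarith) zero_le_one
      _ = (α * |D|)^2 * (1 - κ^2) / 2 := by
          rw [hw, mul_pow, sq_abs]; ring
  nlinarith [mul_pos (mul_pos hα hDpos) hupos, hm]


set_option maxHeartbeats 2000000 in
/-- For small enough step size and any initialization in `[−1,1]²`: (a) successive PGD
iterates get arbitrarily close, and (b) every accumulation point of the iterates is a
fixed point of the projected gradient field. -/
theorem stmt9 (d L : ℕ) (hd : 1 ≤ d) (hL : 1 ≤ L) (γ lam ε : ℝ)
    (hγ : 0 < γ) (hlam : 0 < lam) (hε : 0 ≤ ε) :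
    ∃ abar : ℝ, 0 < abar ∧ ∀ α : ℝ, 0 < α → α ≤ abar → ∀ p₀ ∈ sqIcc,
      (Tendsto (fun t : ℕ =>
          |((pgd d L γ lam ε α)^[t + 1] p₀).1 - ((pgd d L γ lam ε α)^[t] p₀).1|
          + |((pgd d L γ lam ε α)^[t + 1] p₀).2 - ((pgd d L γ lam ε α)^[t] p₀).2|)
        atTop (nhds 0)) ∧
      ∀ p : ℝ × ℝ, MapClusterPt p atTop (fun t : ℕ => (pgd d L γ lam ε α)^[t] p₀) →
        (1 - p.1 ^ 2) * dkR d L γ lam ε p.1 p.2 = 0 ∧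
        (1 - p.2 ^ 2) * dvR d L γ lam ε p.1 p.2 = 0 := by
  classical
  set μ : Measure ℝ := gaussianReal 0 ((lam ^ 2 * γ ^ 2).toNNReal) with hμ
  set F : ℝ × ℝ → ℝ := fun p => Rred d L γ lam ε p.1 p.2 with hFdef
  -- F is C²
  have hF : ContDiff ℝ (2 : WithTop ℕ∞) F := by
    have hZc := contDiff_Z μ
    have h1 : ContDiff ℝ (2 : WithTop ℕ∞)
        (fun p : ℝ × ℝ => lam * Real.sqrt ((d : ℝ) / 2) * p.1 /
          Real.sqrt (1 + 2 * lam ^ 2 * γ ^ 2)) :=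
      (contDiff_const.mul contDiff_fst).div_const _
    have h2 : ContDiff ℝ (2 : WithTop ℕ∞)
        (fun p : ℝ × ℝ => lam * Real.sqrt ((d : ℝ) / 2) * p.1) :=
      contDiff_const.mul contDiff_fst
    have hFeq : F = fun p : ℝ × ℝ =>
        γ ^ 2 - 2 * γ ^ 2 * p.2 * erf (lam * Real.sqrt ((d : ℝ) / 2) * p.1 /
            Real.sqrt (1 + 2 * lam ^ 2 * γ ^ 2))
          + γ ^ 2 * (fun t => ∫ g, phi (t + g) ∂μ) (lam * Real.sqrt ((d : ℝ) / 2) * p.1)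
          + ((L : ℝ) - 1) * zeta 0 (lam ^ 2) + ε ^ 2 := rfl
    rw [hFeq]
    exact ((((contDiff_const.sub (((contDiff_const.mul contDiff_snd)).mul
      (contDiff_erf.comp h1))).add (contDiff_const.mul (hZc.comp h2))).add
      contDiff_const).add contDiff_const)
  have hFd : Differentiable ℝ F := hF.differentiable (by decide)
  -- partial derivatives
  have hdk : ∀ κ ν : ℝ, dkR d L γ lam ε κ ν = fderiv ℝ F (κ, ν) (1, 0) := by
    intro κ ν
    have h := (hFd (κ, ν)).hasFDerivAt.comp_hasDerivAt κ
      ((hasDerivAt_id κ).prodMk (hasDerivAt_const κ ν))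
    exact h.deriv
  have hdv : ∀ κ ν : ℝ, dvR d L γ lam ε κ ν = fderiv ℝ F (κ, ν) (0, 1) := by
    intro κ ν
    have h := (hFd (κ, ν)).hasFDerivAt.comp_hasDerivAt ν
      ((hasDerivAt_const ν κ).prodMk (hasDerivAt_id ν))
    exact h.deriv
  have hgrad : ∀ q v : ℝ × ℝ, fderiv ℝ F q v
      = v.1 * fderiv ℝ F q (1, 0) + v.2 * fderiv ℝ F q (0, 1) := by
    intro q v
    have hv : v = v.1 • ((1:ℝ), (0:ℝ)) + v.2 • ((0:ℝ), (1:ℝ)) := by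
      ext <;> simp
    have h2 : fderiv ℝ F q (v.1 • ((1:ℝ), (0:ℝ)) + v.2 • ((0:ℝ), (1:ℝ)))
        = v.1 * fderiv ℝ F q (1, 0) + v.2 * fderiv ℝ F q (0, 1) := by
      rw [map_add, (fderiv ℝ F q).map_smul, (fderiv ℝ F q).map_smul]; rfl
    rw [← hv] at h2
    exact h2
  -- bound on gradient
  obtain ⟨M0, hM0⟩ := isCompact_sqIcc.exists_bound_of_continuousOn
    ((hF.continuous_fderiv (by decide)).continuousOn)
  set M : ℝ := max M0 0 with hMdef
  have hMnn : 0 ≤ M := le_max_right _ _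
  have hMb : ∀ q ∈ sqIcc, ‖fderiv ℝ F q‖ ≤ M := fun q hq => (hM0 q hq).trans (le_max_left _ _)
  have hDk_le : ∀ q ∈ sqIcc, |fderiv ℝ F q (1, 0)| ≤ M ∧ |fderiv ℝ F q (0, 1)| ≤ M := by
    intro q hq
    have hn1 : ‖((1:ℝ), (0:ℝ))‖ ≤ 1 := by
      rw [Prod.norm_def]; simp
    have hn2 : ‖((0:ℝ), (1:ℝ))‖ ≤ 1 := by
      rw [Prod.norm_def]; simp
    constructor
    · calc |fderiv ℝ F q (1, 0)| = ‖fderiv ℝ F q (1, 0)‖ := (Real.norm_eq_abs _).symm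
        _ ≤ ‖fderiv ℝ F q‖ * ‖((1:ℝ), (0:ℝ))‖ := (fderiv ℝ F q).le_opNorm _
        _ ≤ M * 1 := mul_le_mul (hMb q hq) hn1 (norm_nonneg _) hMnn
        _ = M := mul_one M
    · calc |fderiv ℝ F q (0, 1)| = ‖fderiv ℝ F q (0, 1)‖ := (Real.norm_eq_abs _).symm
        _ ≤ ‖fderiv ℝ F q‖ * ‖((0:ℝ), (1:ℝ))‖ := (fderiv ℝ F q).le_opNorm _
        _ ≤ M * 1 := mul_le_mul (hMb q hq) hn2 (norm_nonneg _) hMnn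
        _ = M := mul_one M
  -- Lipschitz constant of the gradient
  have hfd1 : ContDiff ℝ (1 : WithTop ℕ∞) (fderiv ℝ F) := hF.fderiv_right (by decide)
  obtain ⟨K0, hK0⟩ := isCompact_sqIcc.exists_bound_of_continuousOn
    ((hfd1.continuous_fderiv one_ne_zero).continuousOn)
  set K : ℝ := max K0 0 with hKdef
  have hKnn : 0 ≤ K := le_max_right _ _
  have hlip : LipschitzOnWith K.toNNReal (fderiv ℝ F) sqIcc := by
    apply Convex.lipschitzOnWith_of_nnnorm_fderiv_le
      (fun q _ => (hfd1.differentiable one_ne_zero) q) ?_ convex_sqIcc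
    intro q hq
    rw [← NNReal.coe_le_coe, coe_nnnorm, Real.coe_toNNReal _ hKnn]
    exact (hK0 q hq).trans (le_max_left _ _)
  have hlipR : ∀ p q : ℝ × ℝ, p ∈ sqIcc → q ∈ sqIcc →
      ‖fderiv ℝ F q - fderiv ℝ F p‖ ≤ K * ‖q - p‖ := by
    intro p q hp hq
    have h := hlip.dist_le_mul q hq p hp
    rw [dist_eq_norm, dist_eq_norm] at h
    calc ‖fderiv ℝ F q - fderiv ℝ F p‖ ≤ (K.toNNReal : ℝ) * ‖q - p‖ := h
      _ = K * ‖q - p‖ := by rw [Real.coe_toNNReal _ hKnn]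
  -- Taylor inequality
  have htaylor : ∀ p q : ℝ × ℝ, p ∈ sqIcc → q ∈ sqIcc →
      F q ≤ F p + fderiv ℝ F p (q - p) + K * ‖q - p‖ ^ 2 := by
    intro p q hp hq
    have hseg : segment ℝ p q ⊆ sqIcc := convex_sqIcc.segment_subset hp hq
    have hgd : ∀ x ∈ segment ℝ p q,
        HasFDerivWithinAt (fun x => F x - fderiv ℝ F p x)
          (fderiv ℝ F x - fderiv ℝ F p) (segment ℝ p q) x := fun x _ =>
      (((hFd x).hasFDerivAt.sub (fderiv ℝ F p).hasFDerivAt)).hasFDerivWithinAt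
    have hbound : ∀ x ∈ segment ℝ p q,
        ‖fderiv ℝ F x - fderiv ℝ F p‖ ≤ K * ‖q - p‖ := by
      intro x hx
      have h1 := hlipR p x hp (hseg hx)
      have h2 : ‖x - p‖ ≤ ‖q - p‖ := by
        obtain ⟨a, b, ha, hb, hab, rfl⟩ := hx
        have he : a • p + b • q - p = b • (q - p) := by
          rw [show a = 1 - b by linarith]
          module
        rw [he, norm_smul, Real.norm_eq_abs, abs_of_nonneg hb]
        nlinarith [norm_nonneg (q - p)]
      exact h1.trans (mul_le_mul_of_nonneg_left h2 hKnn)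
    have key := Convex.norm_image_sub_le_of_norm_hasFDerivWithin_le hgd hbound
      (convex_segment p q) (left_mem_segment ℝ p q) (right_mem_segment ℝ p q)
    have hgq : (F q - fderiv ℝ F p q) - (F p - fderiv ℝ F p p)
        = F q - F p - fderiv ℝ F p (q - p) := by
      rw [map_sub]; ring
    rw [Real.norm_eq_abs, hgq] at key
    have h3 := (le_abs_self _).trans key
    nlinarith [norm_nonneg (q - p), sq_nonneg (‖q - p‖)]
  -- step size
  refine ⟨min (1 / (2 * (M + 1))) (1 / (12 * (K + 1))), lt_min (by positivity) (by positivity),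
    ?_⟩
  intro α hα hαle p₀ hp₀
  have hα2M : α * (2 * (M + 1)) ≤ 1 := by
    have h1 : α ≤ 1 / (2 * (M + 1)) := hαle.trans (min_le_left _ _)
    rw [le_div_iff₀ (by positivity)] at h1
    linarith
  have hα12K : α * (12 * (K + 1)) ≤ 1 := by
    have h1 : α ≤ 1 / (12 * (K + 1)) := hαle.trans (min_le_right _ _)
    rw [le_div_iff₀ (by positivity)] at h1
    linarith
  have hαM : ∀ q ∈ sqIcc, α * |fderiv ℝ F q (1, 0)| ≤ 1 / 2
      ∧ α * |fderiv ℝ F q (0, 1)| ≤ 1 / 2 := by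
    intro q hq
    obtain ⟨h1, h2⟩ := hDk_le q hq
    constructor
    · nlinarith [abs_nonneg (fderiv ℝ F q (1, 0)), hα.le]
    · nlinarith [abs_nonneg (fderiv ℝ F q (0, 1)), hα.le]
  set Gmap : ℝ × ℝ → ℝ × ℝ := pgd d L γ lam ε α with hGmap
  -- one-step descent
  have hstep : ∀ q ∈ sqIcc, Gmap q ∈ sqIcc ∧
      F (Gmap q) ≤ F q - (1 / (12 * α)) * (((Gmap q).1 - q.1) ^ 2 + ((Gmap q).2 - q.2) ^ 2) := by
    intro q hq
    obtain ⟨hm1, hm2⟩ := hαM q hq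
    have hq1 : |q.1| ≤ 1 := abs_le.2 ⟨hq.1.1, hq.1.2⟩
    have hq2 : |q.2| ≤ 1 := abs_le.2 ⟨hq.2.1, hq.2.2⟩
    have e1 : (Gmap q).1 = (q.1 - α * (fderiv ℝ F q (1, 0)) * (1 - q.1 ^ 2)) /
        Real.sqrt (1 + α ^ 2 * (fderiv ℝ F q (1, 0)) ^ 2 * (1 - q.1 ^ 2)) := by
      simp only [hGmap, pgd, hdk]
    have e2 : (Gmap q).2 = (q.2 - α * (fderiv ℝ F q (0, 1)) * (1 - q.2 ^ 2)) /
        Real.sqrt (1 + α ^ 2 * (fderiv ℝ F q (0, 1)) ^ 2 * (1 - q.2 ^ 2)) := by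
      simp only [hGmap, pgd, hdv]
    obtain ⟨g1a, g1b, g1c⟩ := step_key q.1 (fderiv ℝ F q (1, 0)) α hq1 hα hm1
    obtain ⟨g2a, g2b, g2c⟩ := step_key q.2 (fderiv ℝ F q (0, 1)) α hq2 hα hm2
    rw [← e1] at g1a g1b g1c
    rw [← e2] at g2a g2b g2c
    have hmem : Gmap q ∈ sqIcc := ⟨Set.mem_Icc.2 (abs_le.1 g1a), Set.mem_Icc.2 (abs_le.1 g2a)⟩
    refine ⟨hmem, ?_⟩
    have hT := htaylor q (Gmap q) hq hmem
    have hfder : fderiv ℝ F q (Gmap q - q) = ((Gmap q).1 - q.1) * fderiv ℝ F q (1, 0)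
        + ((Gmap q).2 - q.2) * fderiv ℝ F q (0, 1) := by
      rw [hgrad q (Gmap q - q)]
      rfl
    have hnq : ‖Gmap q - q‖ ^ 2 ≤ ((Gmap q).1 - q.1) ^ 2 + ((Gmap q).2 - q.2) ^ 2 := by
      have ha1 : ‖(Gmap q - q).1‖ = |(Gmap q).1 - q.1| := by
        rw [Real.norm_eq_abs]; rfl
      have ha2 : ‖(Gmap q - q).2‖ = |(Gmap q).2 - q.2| := by
        rw [Real.norm_eq_abs]; rfl
      rw [Prod.norm_def, ha1, ha2]
      rcases le_total (|(Gmap q).1 - q.1|) (|(Gmap q).2 - q.2|) with h | h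
      · rw [max_eq_right h]
        nlinarith [sq_nonneg ((Gmap q).1 - q.1), sq_abs ((Gmap q).1 - q.1),
          sq_abs ((Gmap q).2 - q.2)]
      · rw [max_eq_left h]
        nlinarith [sq_nonneg ((Gmap q).2 - q.2), sq_abs ((Gmap q).1 - q.1),
          sq_abs ((Gmap q).2 - q.2)]
    set δ1 : ℝ := (Gmap q).1 - q.1 with hδ1
    set δ2 : ℝ := (Gmap q).2 - q.2 with hδ2
    have hsum0 : (0:ℝ) ≤ δ1 ^ 2 + δ2 ^ 2 := by positivity
    have c1 : 6 * α * (δ1 * fderiv ℝ F q (1, 0)) ≤ -δ1 ^ 2 := by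
      have h := mul_le_mul_of_nonneg_left g1b (by positivity : (0:ℝ) ≤ 6 * α)
      have h2 : 6 * α * (-(α / 2) * (fderiv ℝ F q (1, 0) ^ 2 * (1 - q.1 ^ 2)))
          = -(3 * α ^ 2 * (fderiv ℝ F q (1, 0) ^ 2 * (1 - q.1 ^ 2))) := by ring
      rw [h2] at h
      have h3 : 6 * α * (δ1 * fderiv ℝ F q (1, 0))
          = 6 * α * (fderiv ℝ F q (1, 0) * δ1) := by ring
      rw [h3]
      linarith
    have c2 : 6 * α * (δ2 * fderiv ℝ F q (0, 1)) ≤ -δ2 ^ 2 := by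
      have h := mul_le_mul_of_nonneg_left g2b (by positivity : (0:ℝ) ≤ 6 * α)
      have h2 : 6 * α * (-(α / 2) * (fderiv ℝ F q (0, 1) ^ 2 * (1 - q.2 ^ 2)))
          = -(3 * α ^ 2 * (fderiv ℝ F q (0, 1) ^ 2 * (1 - q.2 ^ 2))) := by ring
      rw [h2] at h
      have h3 : 6 * α * (δ2 * fderiv ℝ F q (0, 1))
          = 6 * α * (fderiv ℝ F q (0, 1) * δ2) := by ring
      rw [h3]
      linarith
    have hKS : K * ‖Gmap q - q‖ ^ 2 ≤ K * (δ1 ^ 2 + δ2 ^ 2) :=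
      mul_le_mul_of_nonneg_left hnq hKnn
    have hkey : δ1 * fderiv ℝ F q (1, 0) + δ2 * fderiv ℝ F q (0, 1) + K * (δ1 ^ 2 + δ2 ^ 2)
        ≤ -(1 / (12 * α)) * (δ1 ^ 2 + δ2 ^ 2) := by
      rw [show -(1 / (12 * α)) * (δ1 ^ 2 + δ2 ^ 2) = (-(δ1 ^ 2 + δ2 ^ 2)) / (12 * α) by ring,
        le_div_iff₀ (by positivity : (0:ℝ) < 12 * α)]
      have hKsum : K * (δ1 ^ 2 + δ2 ^ 2) * (12 * α) ≤ δ1 ^ 2 + δ2 ^ 2 := by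
        have := mul_le_mul_of_nonneg_right hα12K hsum0
        nlinarith
      nlinarith
    calc F (Gmap q) ≤ F q + fderiv ℝ F q (Gmap q - q) + K * ‖Gmap q - q‖ ^ 2 := hT
      _ ≤ F q + (δ1 * fderiv ℝ F q (1, 0) + δ2 * fderiv ℝ F q (0, 1))
          + K * (δ1 ^ 2 + δ2 ^ 2) := by rw [hfder]; linarith
      _ ≤ F q + (-(1 / (12 * α)) * (δ1 ^ 2 + δ2 ^ 2)) := by linarith
      _ = F q - 1 / (12 * α) * (δ1 ^ 2 + δ2 ^ 2) := by ring
  -- the iterates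
  set u : ℕ → ℝ × ℝ := fun t => Gmap^[t] p₀ with hu
  have husucc : ∀ t, u (t + 1) = Gmap (u t) := fun t => Function.iterate_succ_apply' Gmap t p₀
  have hin : ∀ t, u t ∈ sqIcc := by
    intro t
    induction t with
    | zero => simpa [hu] using hp₀
    | succ n ih => rw [husucc]; exact (hstep _ ih).1
  set dsq : ℕ → ℝ := fun t => ((u (t + 1)).1 - (u t).1) ^ 2 + ((u (t + 1)).2 - (u t).2) ^ 2
    with hdsqdef
  have hdsq0 : ∀ t, 0 ≤ dsq t := fun t => by positivity
  have hdec : ∀ t, F (u (t + 1)) ≤ F (u t) - (1 / (12 * α)) * dsq t := by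
    intro t
    have h := (hstep (u t) (hin t)).2
    rw [← husucc t] at h
    exact h
  obtain ⟨pm, hpmmem, hpmmin⟩ := isCompact_sqIcc.exists_isMinOn ⟨p₀, hp₀⟩
    (hF.continuous.continuousOn)
  have hlb : ∀ t, F pm ≤ F (u t) := fun t => hpmmin (hin t)
  have hanti : Antitone (fun t => F (u t)) := antitone_nat_of_succ_le (fun t => by
    have h1 := hdec t
    have h2 : 0 ≤ (1 / (12 * α)) * dsq t := by positivity
    linarith)
  have hbdd : BddBelow (Set.range fun t => F (u t)) := by
    refine ⟨F pm, ?_⟩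
    rintro x ⟨t, rfl⟩
    exact hlb t
  have hconv : Tendsto (fun t => F (u t)) atTop (nhds (⨅ t, F (u t))) :=
    tendsto_atTop_ciInf hanti hbdd
  have hconv' : Tendsto (fun t => F (u (t + 1))) atTop (nhds (⨅ t, F (u t))) :=
    hconv.comp (tendsto_add_atTop_nat 1)
  have hdiff0 : Tendsto (fun t => F (u t) - F (u (t + 1))) atTop (nhds 0) := by
    have h := hconv.sub hconv'
    simpa using h
  have hdsqlim : Tendsto dsq atTop (nhds 0) := by
    have hb : ∀ t, dsq t ≤ 12 * α * (F (u t) - F (u (t + 1))) := by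
      intro t
      have h := hdec t
      have h12 : (0:ℝ) < 12 * α := by linarith
      calc dsq t = (12 * α) * ((1 / (12 * α)) * dsq t) := by field_simp
        _ ≤ (12 * α) * (F (u t) - F (u (t + 1))) :=
          mul_le_mul_of_nonneg_left (by linarith) (by linarith)
    have hlim : Tendsto (fun t => 12 * α * (F (u t) - F (u (t + 1)))) atTop (nhds 0) := by
      have h := hdiff0.const_mul (12 * α)
      simpa using h
    exact squeeze_zero hdsq0 hb hlim
  have hsqlim : Tendsto (fun t => Real.sqrt (dsq t)) atTop (nhds 0) := by
    have h := (Real.continuous_sqrt.tendsto 0).comp hdsqlim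
    simpa [Function.comp_def] using h
  have habs1 : ∀ t, |(u (t + 1)).1 - (u t).1| ≤ Real.sqrt (dsq t) := by
    intro t
    rw [← Real.sqrt_sq_eq_abs]
    exact Real.sqrt_le_sqrt (by simp only [hdsqdef]; nlinarith [sq_nonneg ((u (t + 1)).2 - (u t).2)])
  have habs2 : ∀ t, |(u (t + 1)).2 - (u t).2| ≤ Real.sqrt (dsq t) := by
    intro t
    rw [← Real.sqrt_sq_eq_abs]
    exact Real.sqrt_le_sqrt (by simp only [hdsqdef]; nlinarith [sq_nonneg ((u (t + 1)).1 - (u t).1)])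
  have hA : Tendsto (fun t : ℕ => |(u (t + 1)).1 - (u t).1| + |(u (t + 1)).2 - (u t).2|)
      atTop (nhds 0) := by
    apply squeeze_zero (fun t => by positivity) (fun t => ?_)
      (by simpa using hsqlim.const_mul 2)
    calc |(u (t + 1)).1 - (u t).1| + |(u (t + 1)).2 - (u t).2|
        ≤ Real.sqrt (dsq t) + Real.sqrt (dsq t) := add_le_add (habs1 t) (habs2 t)
      _ = 2 * Real.sqrt (dsq t) := by ring
  refine ⟨hA, ?_⟩
  -- part (b)
  intro p hcl
  have hclu : MapClusterPt p atTop u := hcl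
  have hpmem : p ∈ sqIcc := by
    rw [← isClosed_sqIcc.closure_eq]
    rw [mem_closure_iff_nhds]
    intro s hs
    obtain ⟨t, ht⟩ := ((mapClusterPt_iff_frequently.1 hclu) s hs).exists
    exact ⟨u t, ht, hin t⟩
  -- continuity of Gmap at p
  have hdkc : Continuous (fun q : ℝ × ℝ => fderiv ℝ F q (1, 0)) := by
    exact (isBoundedBilinearMap_apply.continuous.comp
      (hfd1.continuous.prodMk continuous_const) : _)
  have hdvc : Continuous (fun q : ℝ × ℝ => fderiv ℝ F q (0, 1)) := by
    exact (isBoundedBilinearMap_apply.continuous.comp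
      (hfd1.continuous.prodMk continuous_const) : _)
  have hGeq : Gmap = fun q : ℝ × ℝ =>
      ((q.1 - α * (fderiv ℝ F (q.1, q.2) (1, 0)) * (1 - q.1 ^ 2)) /
        Real.sqrt (1 + α ^ 2 * (fderiv ℝ F (q.1, q.2) (1, 0)) ^ 2 * (1 - q.1 ^ 2)),
       (q.2 - α * (fderiv ℝ F (q.1, q.2) (0, 1)) * (1 - q.2 ^ 2)) /
        Real.sqrt (1 + α ^ 2 * (fderiv ℝ F (q.1, q.2) (0, 1)) ^ 2 * (1 - q.2 ^ 2))) := by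
    funext q
    simp only [hGmap, pgd, hdk, hdv]
  have hcontA : ContinuousAt Gmap p := by
    rw [hGeq]
    have hc1 : Continuous (fun q : ℝ × ℝ => fderiv ℝ F (q.1, q.2) (1, 0)) := hdkc
    have hc2 : Continuous (fun q : ℝ × ℝ => fderiv ℝ F (q.1, q.2) (0, 1)) := hdvc
    have hden1 : Continuous (fun q : ℝ × ℝ =>
        Real.sqrt (1 + α ^ 2 * (fderiv ℝ F (q.1, q.2) (1, 0)) ^ 2 * (1 - q.1 ^ 2))) :=
      Real.continuous_sqrt.comp (by
        exact continuous_const.add ((continuous_const.mul (hc1.pow 2)).mul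
          (continuous_const.sub (continuous_fst.pow 2))))
    have hden2 : Continuous (fun q : ℝ × ℝ =>
        Real.sqrt (1 + α ^ 2 * (fderiv ℝ F (q.1, q.2) (0, 1)) ^ 2 * (1 - q.2 ^ 2))) :=
      Real.continuous_sqrt.comp (by
        exact continuous_const.add ((continuous_const.mul (hc2.pow 2)).mul
          (continuous_const.sub (continuous_snd.pow 2))))
    have hnum1 : Continuous (fun q : ℝ × ℝ =>
        q.1 - α * (fderiv ℝ F (q.1, q.2) (1, 0)) * (1 - q.1 ^ 2)) :=
      continuous_fst.sub ((continuous_const.mul hc1).mul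
        (continuous_const.sub (continuous_fst.pow 2)))
    have hnum2 : Continuous (fun q : ℝ × ℝ =>
        q.2 - α * (fderiv ℝ F (q.1, q.2) (0, 1)) * (1 - q.2 ^ 2)) :=
      continuous_snd.sub ((continuous_const.mul hc2).mul
        (continuous_const.sub (continuous_snd.pow 2)))
    have hd1ne : Real.sqrt (1 + α ^ 2 * (fderiv ℝ F (p.1, p.2) (1, 0)) ^ 2 * (1 - p.1 ^ 2))
        ≠ 0 := by
      have hp1 : p.1 ^ 2 ≤ 1 := by nlinarith [hpmem.1.1, hpmem.1.2]
      have : (0:ℝ) < 1 + α ^ 2 * (fderiv ℝ F (p.1, p.2) (1, 0)) ^ 2 * (1 - p.1 ^ 2) := by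
        nlinarith [mul_nonneg (mul_nonneg (sq_nonneg α) (sq_nonneg (fderiv ℝ F (p.1, p.2) (1, 0)))) (by linarith : (0:ℝ) ≤ 1 - p.1 ^ 2)]
      exact (Real.sqrt_pos.2 this).ne'
    have hd2ne : Real.sqrt (1 + α ^ 2 * (fderiv ℝ F (p.1, p.2) (0, 1)) ^ 2 * (1 - p.2 ^ 2))
        ≠ 0 := by
      have hp2 : p.2 ^ 2 ≤ 1 := by nlinarith [hpmem.2.1, hpmem.2.2]
      have : (0:ℝ) < 1 + α ^ 2 * (fderiv ℝ F (p.1, p.2) (0, 1)) ^ 2 * (1 - p.2 ^ 2) := by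
        nlinarith [mul_nonneg (mul_nonneg (sq_nonneg α) (sq_nonneg (fderiv ℝ F (p.1, p.2) (0, 1)))) (by linarith : (0:ℝ) ≤ 1 - p.2 ^ 2)]
      exact (Real.sqrt_pos.2 this).ne'
    exact ContinuousAt.prodMk
      ((hnum1.continuousAt).div (hden1.continuousAt) hd1ne)
      ((hnum2.continuousAt).div (hden2.continuousAt) hd2ne)
  -- p is a fixed point of Gmap
  have hfix : Gmap p = p := by
    by_contra hne
    have hdpos : 0 < dist (Gmap p) p := dist_pos.2 (fun h => hne h)
    set r : ℝ := dist (Gmap p) p / 3 with hr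
    have hrpos : 0 < r := by positivity
    obtain ⟨δ, hδpos, hδ⟩ := Metric.continuousAt_iff.1 hcontA r hrpos
    have hev : ∀ᶠ t in atTop, dist (u (t + 1)) (u t) < r := by
      have hev0 := hA (Iio_mem_nhds hrpos)
      rw [mem_map] at hev0
      filter_upwards [hev0] with t ht
      simp only [Set.mem_preimage, Set.mem_Iio] at ht
      have h1 : dist (u (t + 1)).1 (u t).1 ≤ |(u (t + 1)).1 - (u t).1| := by
        rw [Real.dist_eq]
      have h2 : dist (u (t + 1)).2 (u t).2 ≤ |(u (t + 1)).2 - (u t).2| := by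
        rw [Real.dist_eq]
      rw [Prod.dist_eq]
      apply max_lt
      · have := abs_nonneg ((u (t + 1)).2 - (u t).2)
        linarith
      · have := abs_nonneg ((u (t + 1)).1 - (u t).1)
        linarith
    have hfr : ∃ᶠ t in atTop, u t ∈ Metric.ball p (min δ r) :=
      (mapClusterPt_iff_frequently.1 hclu) _ (Metric.ball_mem_nhds p (lt_min hδpos hrpos))
    obtain ⟨t, htball, htstep⟩ := (hfr.and_eventually hev).exists
    have hub : dist (u t) p < δ := lt_of_lt_of_le (Metric.mem_ball.1 htball) (min_le_left _ _)
    have hub2 : dist (u t) p < r := lt_of_lt_of_le (Metric.mem_ball.1 htball) (min_le_right _ _)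
    have h1 : dist (Gmap (u t)) (Gmap p) < r := hδ hub
    have htri : dist (Gmap p) p ≤ dist (Gmap p) (Gmap (u t)) + dist (Gmap (u t)) (u t)
        + dist (u t) p := dist_triangle4 _ _ _ _
    rw [dist_comm (Gmap p) (Gmap (u t))] at htri
    rw [← husucc t] at htri h1
    have : dist (Gmap p) p < 3 * r := by
      have := htstep
      linarith
    rw [hr] at this
    linarith
  -- conclude using the fixed point equations
  have he1 : (Gmap p).1 = p.1 := by rw [hfix]
  have he2 : (Gmap p).2 = p.2 := by rw [hfix]
  have hp1 : |p.1| ≤ 1 := abs_le.2 ⟨hpmem.1.1, hpmem.1.2⟩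
  have hp2 : |p.2| ≤ 1 := abs_le.2 ⟨hpmem.2.1, hpmem.2.2⟩
  obtain ⟨hm1, hm2⟩ := hαM p hpmem
  constructor
  · rw [hdk p.1 p.2]
    apply fix_key p.1 (fderiv ℝ F (p.1, p.2) (1, 0)) α hp1 hα hm1
    have h := he1
    simp only [hGmap, pgd, hdk] at h
    exact h
  · rw [hdv p.1 p.2]
    apply fix_key p.2 (fderiv ℝ F (p.1, p.2) (0, 1)) α hp2 hα hm2
    have h := he2
    simp only [hGmap, pgd, hdv] at h
    exact h
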